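/- Every anticommutative weakly associative algebra over a field of characteristic zero is a Lie algebra (i.e. the Jacobi identity holds). -/
import Mathlib


/-- Every anticommutative weakly associative algebra over a field of characteristic
zero is a Lie algebra (the Jacobi identity holds). -/
theorem stmt_1 {k A : Type*} [Field k] [CharZero k] [AddCommGroup A] [Module k A]
    (mul : A →ₗ[k] A →ₗ[k] A)
    (hanti : ∀ x : A, mul x x = 0)
    (hwa : ∀ x y z : A,
        mul (mul x y) z - mul x (mul y z) + mul (mul y z) x - mul y (mul z x)
          = mul (mul y x) z - mul y (mul x z)) :
    ∀ x y z : A, mul (mul x y) z + mul (mul y z) x + mul (mul z x) y = 0 := by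
  have skew : ∀ x y : A, mul x y = - mul y x := by
    intro x y
    have h := hanti (x + y)
    simp only [map_add, LinearMap.add_apply, hanti] at h
    have h' : mul x y + mul y x = 0 := by
      rw [← h]; abel
    exact eq_neg_of_add_eq_zero_left h'
  intro x y z
  have h := hwa x y z
  have e1 : mul x (mul y z) = - mul (mul y z) x := skew _ _
  have e2 : mul y (mul z x) = - mul (mul z x) y := skew _ _
  have e3 : mul (mul y x) z = - mul (mul x y) z := by
    rw [skew y x]; simp
  have e4 : mul y (mul x z) = mul (mul z x) y := by
    rw [skew x z]; simp [skew y (mul z x)]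
  rw [e1, e2, e3, e4] at h
  have h2 : (2 : k) • (mul (mul x y) z + mul (mul y z) x + mul (mul z x) y) = 0 := by
    rw [two_smul]
    have := h
    abel_nf at this ⊢
    linear_combination (norm := abel_nf) this
  have h3 := (smul_eq_zero.mp h2).resolve_left (by norm_num)
  exact h3
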